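/- Let p be a polynomial of degree d ≥ 2 with repelling fixed point z_0 of multiplier λ, and let L be a linearizer of p at z_0. Then the order of L satisfies ρ(L) = log d / log|λ|, where ρ(L) = limsup_{r→∞} log log M(L,r) / log r and M(L,r) = max_{|z|=r} |L(z)|. -/

import Mathlib

open Filter Real Set Metric Bornology Topology

noncomputable def maxMod (L : ℂ → ℂ) (r : ℝ) : ℝ :=
  sSup ((fun z => ‖L z‖) '' Metric.sphere (0:ℂ) r)

section Aux
variable {L : ℂ → ℂ}

lemma maxMod_bddAbove (hL : Continuous L) (r : ℝ) :
    BddAbove ((fun z => ‖L z‖) '' Metric.sphere (0:ℂ) r) :=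
  ((isCompact_sphere 0 r).image (continuous_norm.comp hL)).bddAbove

lemma le_maxMod (hL : Continuous L) {z : ℂ} {r : ℝ} (hz : ‖z‖ = r) :
    ‖L z‖ ≤ maxMod L r :=
  le_csSup (maxMod_bddAbove hL r) ⟨z, by simpa using hz, rfl⟩

lemma maxMod_attained (hL : Continuous L) {r : ℝ} (hr : 0 ≤ r) :
    ∃ z : ℂ, ‖z‖ = r ∧ ‖L z‖ = maxMod L r := by
  have hne : (Metric.sphere (0:ℂ) r).Nonempty := NormedSpace.sphere_nonempty.2 hr
  have hcomp := (isCompact_sphere (0:ℂ) r).image (continuous_norm.comp hL)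
  obtain ⟨z, hz, hz2⟩ := hcomp.sSup_mem (hne.image _)
  exact ⟨z, by simpa using hz, hz2⟩

lemma maxMod_nonneg (hL : Continuous L) {r : ℝ} (hr : 0 ≤ r) : 0 ≤ maxMod L r := by
  obtain ⟨z, hz⟩ : (Metric.sphere (0:ℂ) r).Nonempty := NormedSpace.sphere_nonempty.2 hr
  exact le_trans (norm_nonneg _) (le_maxMod hL (by simpa using hz))

lemma maxMod_mono (hL : Differentiable ℂ L) : MonotoneOn (maxMod L) (Set.Ici 0) := by
  intro r hr s hs hrs
  rcases eq_or_lt_of_le (hrs.trans' hr) with h0 | hspos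
  · obtain rfl : r = s := le_antisymm hrs (h0 ▸ hr)
    exact le_rfl
  apply Real.sSup_le _ (maxMod_nonneg hL.continuous hs)
  rintro x ⟨z, hz, rfl⟩
  have hz' : ‖z‖ = r := by simpa using hz
  refine Complex.norm_le_of_forall_mem_frontier_norm_le (isBounded_ball (x := (0:ℂ)) (r := s))
    hL.diffContOnCl ?_ ?_
  · intro w hw
    rw [frontier_ball (0:ℂ) hspos.ne'] at hw
    exact le_maxMod hL.continuous (by simpa using hw)
  · rw [closure_ball (0:ℂ) hspos.ne']
    simpa [hz'] using hrs

lemma maxMod_monotone (hL : Differentiable ℂ L) : Monotone (maxMod L) := by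
  intro r s hrs
  rcases lt_or_ge s 0 with hs | hs
  · have hr : r < 0 := lt_of_le_of_lt hrs hs
    unfold maxMod
    rw [Metric.sphere_eq_empty_of_neg hr, Metric.sphere_eq_empty_of_neg hs]
  · rcases lt_or_ge r 0 with hr | hr
    · have h0 : maxMod L r = 0 := by
        unfold maxMod
        rw [Metric.sphere_eq_empty_of_neg hr]
        simp [Real.sSup_empty]
      rw [h0]; exact maxMod_nonneg hL.continuous hs
    · exact maxMod_mono hL hr hs hrs

lemma maxMod_tendsto (hL : Differentiable ℂ L) (hL' : deriv L 0 ≠ 0) :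
    Tendsto (maxMod L) atTop atTop := by
  refine tendsto_atTop_atTop_of_monotone (maxMod_monotone hL) ?_
  intro b
  by_contra h
  push_neg at h
  have hb : IsBounded (Set.range L) := by
    rw [isBounded_iff_forall_norm_le]
    refine ⟨b, ?_⟩
    rintro x ⟨z, rfl⟩
    calc ‖L z‖ = ‖L z‖ := rfl
    _ ≤ maxMod L (‖z‖) := le_maxMod hL.continuous rfl
    _ ≤ b := (h _).le
  have hconst : L = fun _ => L 0 := funext fun z => hL.apply_eq_apply_of_bounded hb z 0
  rw [hconst] at hL'
  simp at hL'

end Aux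

lemma poly_upper (p : Polynomial ℂ) (d : ℕ) (hdeg : p.natDegree = d) :
    ∃ C : ℝ, 0 < C ∧ ∀ w : ℂ, ‖p.eval w‖ ≤ C * (max 1 (‖w‖)) ^ d := by
  refine ⟨(∑ i ∈ Finset.range (d+1), ‖p.coeff i‖) + 1, by positivity, fun w => ?_⟩
  have h1 : (1:ℝ) ≤ max 1 (‖w‖) := le_max_left _ _
  have heval : p.eval w = ∑ i ∈ Finset.range (d+1), p.coeff i * w ^ i := by
    rw [Polynomial.eval_eq_sum_range, hdeg]
  rw [heval]
  calc ‖∑ i ∈ Finset.range (d+1), p.coeff i * w ^ i‖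
      ≤ ∑ i ∈ Finset.range (d+1), ‖p.coeff i * w ^ i‖ :=
        norm_sum_le _ _
    _ ≤ ∑ i ∈ Finset.range (d+1), ‖p.coeff i‖ * (max 1 (‖w‖)) ^ d := by
        refine Finset.sum_le_sum fun i hi => ?_
        rw [norm_mul, norm_pow]
        refine mul_le_mul_of_nonneg_left ?_ (norm_nonneg _)
        calc ‖w‖ ^ i ≤ (max 1 (‖w‖)) ^ i :=
              pow_le_pow_left₀ (norm_nonneg _) (le_max_right _ _) _
          _ ≤ (max 1 (‖w‖)) ^ d :=
              pow_le_pow_right₀ h1 (by simp at hi; omega)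
    _ = (∑ i ∈ Finset.range (d+1), ‖p.coeff i‖) * (max 1 (‖w‖)) ^ d := by
        rw [← Finset.sum_mul]
    _ ≤ _ := by
        have h0 : (0:ℝ) ≤ (max 1 (‖w‖)) ^ d := by positivity
        exact mul_le_mul_of_nonneg_right (by linarith) h0

lemma poly_lower (p : Polynomial ℂ) (d : ℕ) (hd : 1 ≤ d) (hdeg : p.natDegree = d) :
    ∃ C : ℝ, 0 < C ∧ ∃ R : ℝ, 1 ≤ R ∧ ∀ w : ℂ, R ≤ ‖w‖ →
      C * ‖w‖ ^ d ≤ ‖p.eval w‖ := by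
  have hp0 : p ≠ 0 := fun h => by simp [h] at hdeg; omega
  set A := ‖p.leadingCoeff‖ with hA
  have hApos : 0 < A := by
    simpa [hA, norm_pos_iff] using Polynomial.leadingCoeff_ne_zero.2 hp0
  set B := ∑ i ∈ Finset.range d, ‖p.coeff i‖ with hB
  have hBnn : 0 ≤ B := Finset.sum_nonneg fun i _ => norm_nonneg _
  refine ⟨A/2, by positivity, max 1 (2*(B+1)/A), le_max_left _ _, fun w hw => ?_⟩
  have hw1 : (1:ℝ) ≤ ‖w‖ := le_trans (le_max_left _ _) hw
  have hw2 : 2*(B+1)/A ≤ ‖w‖ := le_trans (le_max_right _ _) hw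
  have heval : p.eval w = (∑ i ∈ Finset.range d, p.coeff i * w ^ i) + p.leadingCoeff * w ^ d := by
    rw [Polynomial.eval_eq_sum_range, hdeg, Finset.sum_range_succ, ← hdeg,
      Polynomial.coeff_natDegree, hdeg]
  set S := ∑ i ∈ Finset.range d, p.coeff i * w ^ i with hS
  have hSbound : ‖S‖ ≤ B * ‖w‖ ^ (d-1) := by
    calc ‖S‖ ≤ ∑ i ∈ Finset.range d, ‖p.coeff i * w ^ i‖ :=
          norm_sum_le _ _
      _ ≤ ∑ i ∈ Finset.range d, ‖p.coeff i‖ * ‖w‖ ^ (d-1) := by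
          refine Finset.sum_le_sum fun i hi => ?_
          rw [norm_mul, norm_pow]
          exact mul_le_mul_of_nonneg_left
            (pow_le_pow_right₀ hw1 (by simp at hi; omega)) (norm_nonneg _)
      _ = B * ‖w‖ ^ (d-1) := by rw [← Finset.sum_mul]
  have hmain : A * ‖w‖ ^ d - ‖S‖ ≤ ‖p.eval w‖ := by
    have h1 : ‖p.leadingCoeff * w ^ d‖ = A * ‖w‖ ^ d := by
      rw [norm_mul, norm_pow]
    have h2 : ‖p.leadingCoeff * w ^ d‖ ≤ ‖p.eval w‖ + ‖S‖ := by
      have h3 : p.leadingCoeff * w ^ d = p.eval w - S := by rw [heval]; ring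
      rw [h3]
      exact le_trans (norm_sub_le _ _) le_rfl
    linarith [h1 ▸ h2]
  have hpow : ‖w‖ ^ d = ‖w‖ * ‖w‖ ^ (d-1) := by
    conv_lhs => rw [show d = (d-1)+1 by omega]
    rw [pow_succ]; ring
  have hAw : 2*(B+1) ≤ A * ‖w‖ := by
    rw [div_le_iff₀ hApos] at hw2; linarith [hw2]
  have hxnn : 0 ≤ ‖w‖ ^ (d-1) := by positivity
  have hfin : A/2 * ‖w‖ ^ d ≤ A * ‖w‖ ^ d - ‖S‖ := by
    rw [hpow]
    nlinarith [hSbound, hxnn, hAw, mul_le_mul_of_nonneg_right hAw hxnn]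
  linarith

lemma iter_grow (u : ℝ → ℝ) (a D K' r₀ : ℝ) (ha : 1 ≤ a) (hD : 0 ≤ D) (hr₀ : 0 < r₀)
    (h : ∀ r, r₀ ≤ r → D * (u r - K') ≤ u (a*r) - K') :
    ∀ n : ℕ, ∀ r, r₀ ≤ r → D^n * (u r - K') ≤ u (a^n * r) - K' := by
  intro n
  induction n with
  | zero => simp
  | succ n ih =>
    intro r hr
    have h1 : r₀ ≤ a^n * r :=
      le_trans hr (le_mul_of_one_le_left (le_trans hr₀.le hr) (one_le_pow₀ ha))
    have h2 := h _ h1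
    have h3 := ih r hr
    calc D^(n+1) * (u r - K') = D * (D^n * (u r - K')) := by ring
    _ ≤ D * (u (a^n * r) - K') := mul_le_mul_of_nonneg_left h3 hD
    _ ≤ u (a * (a^n * r)) - K' := h2
    _ = u (a^(n+1) * r) - K' := by rw [← mul_assoc, ← pow_succ']

theorem order_of_polynomial_linearizer (p : Polynomial ℂ) (d : ℕ) (hd : 2 ≤ d)
    (hdeg : p.natDegree = d) (z₀ lam : ℂ) (hfix : p.eval z₀ = z₀)
    (hlam : lam = (Polynomial.derivative p).eval z₀) (hrep : 1 < ‖lam‖)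
    (L : ℂ → ℂ) (hL : Differentiable ℂ L) (hL0 : L 0 = z₀) (hL' : deriv L 0 ≠ 0)
    (hLeq : ∀ z : ℂ, p.eval (L z) = L (lam * z)) :
    Filter.limsup (fun r : ℝ => Real.log (Real.log (maxMod L r)) / Real.log r)
        Filter.atTop = Real.log d / Real.log (‖lam‖) := by
  have hd1 : (1:ℝ) < (d:ℝ) := by exact_mod_cast lt_of_lt_of_le one_lt_two hd
  have hdnn : (0:ℝ) ≤ (d:ℝ) := by positivity
  set a : ℝ := ‖lam‖ with ha
  have ha1 : 1 < a := hrep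
  have ha0 : 0 < a := lt_trans one_pos ha1
  have hlam0 : lam ≠ 0 := by
    intro h
    rw [ha, h] at ha1
    norm_num at ha1
  obtain ⟨C2, hC2, hup⟩ := poly_upper p d hdeg
  obtain ⟨C1, hC1, R1, hR1, hlow⟩ := poly_lower p d (by omega) hdeg
  set K : ℝ := |Real.log C1| + |Real.log C2| + 1 with hK
  have hKpos : 0 < K := by positivity
  set K' : ℝ := K / ((d:ℝ) - 1) with hK'
  have hK'pos : 0 < K' := div_pos hKpos (by linarith)
  have hKK' : K = K' * ((d:ℝ) - 1) := by
    rw [hK', div_mul_cancel₀]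
    linarith
  -- choose r₂
  set u : ℝ → ℝ := fun r => Real.log (maxMod L r) with hu
  have hMtop := maxMod_tendsto hL hL'
  obtain ⟨r₂', hr₂'⟩ := Filter.eventually_atTop.mp
    (hMtop.eventually_ge_atTop (max R1 (Real.exp (K' + 1))))
  set r₂ : ℝ := max r₂' 1 with hr₂def
  have hr₂1 : (1:ℝ) ≤ r₂ := le_max_right _ _
  have hr₂pos : (0:ℝ) < r₂ := lt_of_lt_of_le one_pos hr₂1
  have hMbig : ∀ r, r₂ ≤ r → max R1 (Real.exp (K' + 1)) ≤ maxMod L r :=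
    fun r hr => hr₂' r (le_trans (le_max_left _ _) hr)
  have hM1 : ∀ r, r₂ ≤ r → 1 ≤ maxMod L r := fun r hr =>
    le_trans (le_trans hR1 (le_max_left _ _)) (hMbig r hr)
  have hMpos : ∀ r, r₂ ≤ r → 0 < maxMod L r := fun r hr => lt_of_lt_of_le one_pos (hM1 r hr)
  have hMR1 : ∀ r, r₂ ≤ r → R1 ≤ maxMod L r := fun r hr =>
    le_trans (le_max_left _ _) (hMbig r hr)
  have hubig : ∀ r, r₂ ≤ r → K' + 1 ≤ u r := by
    intro r hr
    rw [hu]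
    have := le_trans (le_max_right _ _) (hMbig r hr)
    calc K' + 1 = Real.log (Real.exp (K' + 1)) := (Real.log_exp _).symm
    _ ≤ Real.log (maxMod L r) := Real.log_le_log (Real.exp_pos _) this
  have hUmono : ∀ r s, r₂ ≤ r → r ≤ s → u r ≤ u s := by
    intro r s hr hrs
    exact Real.log_le_log (hMpos r hr) (maxMod_monotone hL hrs)
  -- growth inequalities
  have hgrow : ∀ r, r₂ ≤ r →
      C1 * (maxMod L r)^d ≤ maxMod L (a*r) ∧ maxMod L (a*r) ≤ C2 * (maxMod L r)^d := by
    intro r hr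
    have hr0 : (0:ℝ) ≤ r := le_trans hr₂pos.le hr
    constructor
    · obtain ⟨z, hz, hzM⟩ := maxMod_attained hL.continuous hr0
      have hLz : R1 ≤ ‖L z‖ := hzM ▸ hMR1 r hr
      have h1 := hlow (L z) hLz
      rw [hzM] at h1
      have h2 : ‖p.eval (L z)‖ = ‖L (lam * z)‖ := by rw [hLeq]
      have h3 : ‖lam * z‖ = a * r := by rw [norm_mul, hz]
      exact le_trans h1 (h2 ▸ le_maxMod hL.continuous h3)
    · have hMp := hMpos r hr
      apply Real.sSup_le _ (by positivity)
      rintro x ⟨w, hw, rfl⟩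
      have hw' : ‖w‖ = a * r := by simpa using hw
      set z := w / lam with hzdef
      have hwz : lam * z = w := by rw [mul_comm]; exact div_mul_cancel₀ w hlam0
      have hz : ‖z‖ = r := by
        rw [hzdef, norm_div, hw', ← ha]
        field_simp
      have h1 : ‖L w‖ = ‖p.eval (L z)‖ := by rw [hLeq, hwz]
      show ‖L w‖ ≤ _
      rw [h1]
      refine le_trans (hup (L z)) ?_
      refine mul_le_mul_of_nonneg_left ?_ hC2.le
      refine pow_le_pow_left₀ (by positivity) ?_ _
      exact max_le (hM1 r hr) (le_maxMod hL.continuous hz)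
  -- log form
  have hlrec : ∀ r, r₂ ≤ r → (d:ℝ) * (u r - K') ≤ u (a*r) - K' := by
    intro r hr
    have hM := hMpos r hr
    have h1 := (hgrow r hr).1
    have h2 : Real.log (C1 * (maxMod L r)^d) ≤ u (a*r) := by
      rw [hu]
      exact Real.log_le_log (by positivity) h1
    rw [Real.log_mul hC1.ne' (by positivity), Real.log_pow] at h2
    have hlc1 : -K ≤ Real.log C1 := by
      have h4 := neg_abs_le (Real.log C1)
      have h5 := abs_nonneg (Real.log C2)
      rw [hK]; linarith
    have : u (a*r) ≥ (d:ℝ) * u r - K := by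
      push_cast at h2 ⊢
      linarith
    rw [hKK'] at this
    linarith
  have hhrec : ∀ r, r₂ ≤ r → (d:ℝ) * ((-u) r - K') ≤ (-u) (a*r) - K' := by
    intro r hr
    have hM := hMpos r hr
    have h1 := (hgrow r hr).2
    have h2 : u (a*r) ≤ Real.log (C2 * (maxMod L r)^d) := by
      rw [hu]
      refine Real.log_le_log ?_ h1
      exact lt_of_lt_of_le (hMpos r hr) (maxMod_monotone hL (le_mul_of_one_le_left (le_trans hr₂pos.le hr) ha1.le))
    rw [Real.log_mul hC2.ne' (by positivity), Real.log_pow] at h2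
    have hlc2 : Real.log C2 ≤ K := by
      rw [hK]; linarith [le_abs_self (Real.log C2), abs_nonneg (Real.log C1)]
    have : u (a*r) ≤ (d:ℝ) * u r + K := by
      push_cast at h2 ⊢
      linarith
    rw [hKK'] at this
    simp only [Pi.neg_apply]
    linarith
  -- iterated growth
  have ilow := iter_grow u a (d:ℝ) K' r₂ ha1.le hdnn hr₂pos hlrec
  have ihigh := iter_grow (-u) a (d:ℝ) K' r₂ ha1.le hdnn hr₂pos hhrec
  set cm : ℝ := u r₂ - K' with hcm
  set cp : ℝ := u r₂ + K' with hcp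
  have hcm1 : 1 ≤ cm := by have := hubig r₂ le_rfl; rw [hcm]; linarith
  have hcp1 : 1 ≤ cp := by have := hubig r₂ le_rfl; rw [hcp]; linarith
  have hulow : ∀ n : ℕ, (d:ℝ)^n * cm ≤ u (a^n * r₂) := by
    intro n
    have h1 := ilow n r₂ le_rfl
    rw [hcm]
    linarith
  have huhigh : ∀ n : ℕ, u (a^n * r₂) ≤ (d:ℝ)^n * cp := by
    intro n
    have h1 := ihigh n r₂ le_rfl
    simp only [Pi.neg_apply] at h1
    rw [hcp]
    linarith
  set β : ℝ := Real.log d / Real.log a with hβ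
  have hloga : 0 < Real.log a := Real.log_pos ha1
  have hlogd : 0 < Real.log d := Real.log_pos hd1
  have hβpos : 0 < β := div_pos hlogd hloga
  set γm : ℝ := -(Real.log r₂ / Real.log a) * Real.log d - Real.log d + Real.log cm with hγm
  set γp : ℝ := -(Real.log r₂ / Real.log a) * Real.log d + Real.log d + Real.log cp with hγp
  have hid : β * Real.log r₂ = Real.log r₂ / Real.log a * Real.log d := by
    rw [hβ]; ring
  have hbound : ∀ r : ℝ, max r₂ 2 ≤ r →
      β + γm / Real.log r ≤ Real.log (u r) / Real.log r ∧
      Real.log (u r) / Real.log r ≤ β + γp / Real.log r := by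
    intro r hr
    have hrr₂ : r₂ ≤ r := le_trans (le_max_left _ _) hr
    have hr2 : (2:ℝ) ≤ r := le_trans (le_max_right _ _) hr
    have hrpos : (0:ℝ) < r := by linarith
    have hlogr : 0 < Real.log r := Real.log_pos (by linarith)
    obtain ⟨n, hn1, hn2⟩ := exists_nat_pow_near (show (1:ℝ) ≤ r / r₂ by
      rw [le_div_iff₀ hr₂pos]; linarith) ha1
    have h1 : a^n * r₂ ≤ r := (le_div_iff₀ hr₂pos).1 hn1
    have h2 : r < a^(n+1) * r₂ := (div_lt_iff₀ hr₂pos).1 hn2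
    have hr₂an : r₂ ≤ a^n * r₂ := le_mul_of_one_le_left hr₂pos.le (one_le_pow₀ ha1.le)
    have hulo : (d:ℝ)^n * cm ≤ u r := le_trans (hulow n) (hUmono _ _ hr₂an h1)
    have huhi : u r ≤ (d:ℝ)^(n+1) * cp := le_trans (hUmono _ _ hrr₂ h2.le) (huhigh (n+1))
    have hdn1 : (1:ℝ) ≤ (d:ℝ)^n := one_le_pow₀ hd1.le
    have hdpow : (0:ℝ) < (d:ℝ)^n := pow_pos (by linarith) n
    have hcmpos : (0:ℝ) < cm := by linarith
    have hpos := mul_pos hdpow hcmpos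
    have hurpos : 0 < u r := lt_of_lt_of_le hpos hulo
    have hlogulo : (n:ℝ) * Real.log d + Real.log cm ≤ Real.log (u r) := by
      have h3 := Real.log_le_log hpos hulo
      rwa [Real.log_mul hdpow.ne' hcmpos.ne', Real.log_pow] at h3
    have hloguhi : Real.log (u r) ≤ ((n:ℝ)+1) * Real.log d + Real.log cp := by
      have h3 := Real.log_le_log hurpos huhi
      rw [Real.log_mul (pow_pos (by linarith : (0:ℝ) < (d:ℝ)) (n+1)).ne' (by linarith : cp ≠ 0), Real.log_pow] at h3
      push_cast at h3 ⊢
      linarith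
    have hlog1 : (n:ℝ) * Real.log a ≤ Real.log r - Real.log r₂ := by
      have h3 := Real.log_le_log (by positivity) hn1
      rwa [Real.log_pow, Real.log_div hrpos.ne' hr₂pos.ne'] at h3
    have hlog2 : Real.log r - Real.log r₂ ≤ ((n:ℝ)+1) * Real.log a := by
      have h3 := Real.log_le_log (by positivity) hn2.le
      rw [Real.log_pow, Real.log_div hrpos.ne' hr₂pos.ne'] at h3
      push_cast at h3 ⊢
      linarith
    constructor
    · rw [show β + γm / Real.log r = (β * Real.log r + γm) / Real.log r by field_simp]
      rw [div_le_div_iff_of_pos_right hlogr]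
      have key : β * (Real.log r - Real.log r₂) ≤ ((n:ℝ)+1) * Real.log d := by
        calc β * (Real.log r - Real.log r₂) ≤ β * (((n:ℝ)+1) * Real.log a) :=
              mul_le_mul_of_nonneg_left hlog2 hβpos.le
        _ = ((n:ℝ)+1) * Real.log d := by rw [hβ]; field_simp
      rw [hγm]
      linarith
    · rw [show β + γp / Real.log r = (β * Real.log r + γp) / Real.log r by field_simp]
      rw [div_le_div_iff_of_pos_right hlogr]
      have key : (n:ℝ) * Real.log d ≤ β * (Real.log r - Real.log r₂) := by
        calc (n:ℝ) * Real.log d = β * ((n:ℝ) * Real.log a) := by rw [hβ]; field_simp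
        _ ≤ β * (Real.log r - Real.log r₂) := mul_le_mul_of_nonneg_left hlog1 hβpos.le
      rw [hγp]
      linarith
  have hinv : Tendsto (fun r : ℝ => (Real.log r)⁻¹) atTop (𝓝 0) :=
    Real.tendsto_log_atTop.inv_tendsto_atTop
  have hgm : Tendsto (fun r : ℝ => β + γm / Real.log r) atTop (𝓝 β) := by
    have h3 : Tendsto (fun r : ℝ => β + γm * (Real.log r)⁻¹) atTop (𝓝 (β + γm * 0)) :=
      tendsto_const_nhds.add (hinv.const_mul γm)
    simpa [div_eq_mul_inv] using h3
  have hgp : Tendsto (fun r : ℝ => β + γp / Real.log r) atTop (𝓝 β) := by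
    have h3 : Tendsto (fun r : ℝ => β + γp * (Real.log r)⁻¹) atTop (𝓝 (β + γp * 0)) :=
      tendsto_const_nhds.add (hinv.const_mul γp)
    simpa [div_eq_mul_inv] using h3
  have htends : Tendsto (fun r : ℝ => Real.log (u r) / Real.log r) atTop (𝓝 β) := by
    refine tendsto_of_tendsto_of_tendsto_of_le_of_le' hgm hgp ?_ ?_
    · filter_upwards [eventually_ge_atTop (max r₂ 2)] with r hr using (hbound r hr).1
    · filter_upwards [eventually_ge_atTop (max r₂ 2)] with r hr using (hbound r hr).2
  exact htends.limsup_eq
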